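/- Let N be the Newton approximant chain for a Scott-continuous function f on a complete semiring with truncated subtraction and a Taylor expansion property f(a+b) ≥ f(a) + f'(a)·b: define z_0 = 0 and z_{n+1} = z_n + (f'(z_n))* · (f(z_n) ⊖ z_n), where (·)* is the Kleene star. Then for all n: (1) z_n ≤ f(z_n); (2) f(z_n) ≤ z_{n+1}; (3) the Scott approximants satisfy y_n ≤ z_n where y_0 = 0, y_{n+1} = f(y_n); (4) z_n ≤ y, where y is the least fixpoint of f. Hence the Newton chain is increasing and converges to the least fixpoint from below. -/

import Mathlib

/-- Finite approximants of the Kleene star. -/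
def starN {S : Type*} [Semiring S] (a : S) : ℕ → S
  | 0 => 0
  | n + 1 => 1 + a * starN a n

/-- The Kleene star `a* = ⨆ n, a^{*_n}`. -/
noncomputable def kstar {S : Type*} [Semiring S] [CompleteLattice S] (a : S) : S :=
  ⨆ n, starN a n

/-- The Newton approximants: `z_0 = 0`,
`z_{n+1} = z_n + (f'(z_n))* · (f(z_n) ⊖ z_n)`. -/
noncomputable def newtonZ {S : Type*} [Semiring S] [CompleteLattice S]
    (f df : S → S) (sub : S → S → S) : ℕ → S
  | 0 => 0
  | n + 1 =>
      newtonZ f df sub n +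
        kstar (df (newtonZ f df sub n)) *
          sub (f (newtonZ f df sub n)) (newtonZ f df sub n)

/-- in a complete semiring with truncated subtraction and the
sub-Taylor property `f(a) + f'(a)·b ≤ f(a+b)`, the Newton approximants form an
increasing chain satisfying `z_n ≤ f(z_n) ≤ z_{n+1}`, dominating the Scott
approximants `f^n(0)` and bounded by the least fixpoint `y`, and they converge
to `y` from below. -/
theorem newton_approximants_converge {S : Type*} [Semiring S] [CompleteLattice S]
    [CovariantClass S S (· + ·) (· ≤ ·)]
    [CovariantClass S S (· * ·) (· ≤ ·)]
    [CovariantClass S S (Function.swap (· * ·)) (· ≤ ·)]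
    (f df : S → S) (sub : S → S → S) (y : S)
    (hbot : ∀ s : S, (0 : S) ≤ s)
    (hgalois : ∀ a b c : S, sub a b ≤ c ↔ a ≤ b + c)
    (hsub_add : ∀ a b : S, b ≤ a → sub a b + b = a)
    (hmono : Monotone f)
    (htaylor : ∀ a b : S, f a + df a * b ≤ f (a + b))
    (hmulsup : ∀ (a : S) (g : ℕ → S), Monotone g → a * (⨆ n, g n) = ⨆ n, a * g n)
    (hsupmul : ∀ (a : S) (g : ℕ → S), Monotone g → (⨆ n, g n) * a = ⨆ n, g n * a)
    (haddsup : ∀ (a : S) (g : ℕ → S), Monotone g → a + (⨆ n, g n) = ⨆ n, a + g n)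
    (hyfix : f y = y)
    (hysup : y = ⨆ n, f^[n] 0) :
    (∀ n, newtonZ f df sub n ≤ f (newtonZ f df sub n)) ∧
    (∀ n, f (newtonZ f df sub n) ≤ newtonZ f df sub (n + 1)) ∧
    (∀ n, f^[n] 0 ≤ newtonZ f df sub n) ∧
    (∀ n, newtonZ f df sub n ≤ y) ∧
    (∀ n, newtonZ f df sub n ≤ newtonZ f df sub (n + 1)) ∧
    (⨆ n, newtonZ f df sub n) = y := by
  -- monotonicity of starN
  have hstarmono : ∀ a : S, Monotone (starN a) := by
    intro a
    apply monotone_nat_of_le_succ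
    intro n
    induction n with
    | zero => exact hbot _
    | succ n ih =>
      exact add_le_add_right (mul_le_mul_right ih a) 1
  -- star fixpoint equation
  have hstar_fix : ∀ a : S, kstar a = 1 + a * kstar a := by
    intro a
    rw [kstar, hmulsup a _ (hstarmono a),
      haddsup 1 _ (fun m n h => mul_le_mul_right (hstarmono a h) a)]
    apply le_antisymm
    · apply iSup_le; intro n
      exact le_trans (hstarmono a (Nat.le_succ n))
        (le_iSup (fun n => 1 + a * starN a n) n)
    · apply iSup_le; intro n
      exact le_iSup (starN a) (n + 1)
  have hone_le_star : ∀ a : S, (1 : S) ≤ kstar a := by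
    intro a
    have h := le_iSup (starN a) 1
    simpa [starN, kstar] using h
  -- (1)
  have h1 : ∀ n, newtonZ f df sub n ≤ f (newtonZ f df sub n) := by
    intro n
    induction n with
    | zero => simpa [newtonZ] using hbot (f 0)
    | succ n ih =>
      simp only [newtonZ]
      set z := newtonZ f df sub n with hzdef
      set d := df z with hddef
      set s := sub (f z) z with hsdef
      have hs : s + z = f z := hsub_add _ _ ih
      have expand : z + kstar d * s = f z + d * (kstar d * s) := by
        conv_lhs => rw [hstar_fix d]
        rw [add_mul, one_mul, mul_assoc, ← add_assoc, add_comm z s, hs]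
      rw [expand]
      calc f z + d * (kstar d * s) ≤ f (z + kstar d * s) := htaylor z _
        _ = f (f z + d * (kstar d * s)) := by rw [expand]
  -- (2)
  have h2 : ∀ n, f (newtonZ f df sub n) ≤ newtonZ f df sub (n + 1) := by
    intro n
    simp only [newtonZ]
    set z := newtonZ f df sub n with hzdef
    set d := df z with hddef
    set s := sub (f z) z with hsdef
    have hs : s + z = f z := hsub_add _ _ (h1 n)
    calc f z = z + s := by rw [← hs, add_comm]
      _ ≤ z + kstar d * s := by
          refine add_le_add_right ?_ z
          calc s = 1 * s := (one_mul s).symm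
            _ ≤ kstar d * s := mul_le_mul_left (hone_le_star d) s
  -- (3)
  have h3 : ∀ n, f^[n] 0 ≤ newtonZ f df sub n := by
    intro n
    induction n with
    | zero => simp [newtonZ]
    | succ n ih =>
      rw [Function.iterate_succ_apply']
      exact le_trans (hmono ih) (h2 n)
  -- (4)
  have h4 : ∀ n, newtonZ f df sub n ≤ y := by
    intro n
    induction n with
    | zero => simpa [newtonZ] using hbot y
    | succ n ih =>
      simp only [newtonZ]
      set z := newtonZ f df sub n with hzdef
      set d := df z with hddef
      set s := sub (f z) z with hsdef
      have hs : s + z = f z := hsub_add _ _ (h1 n)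
      have hk : ∀ k, z + starN d k * s ≤ y := by
        intro k
        induction k with
        | zero => simpa [starN] using ih
        | succ k ihk =>
          have expand : z + starN d (k + 1) * s = f z + d * (starN d k * s) := by
            show z + (1 + d * starN d k) * s = f z + d * (starN d k * s)
            rw [add_mul, one_mul, mul_assoc, ← add_assoc, add_comm z s, hs]
          rw [expand]
          calc f z + d * (starN d k * s) ≤ f (z + starN d k * s) := htaylor z _
            _ ≤ f y := hmono ihk
            _ = y := hyfix
      rw [kstar, hsupmul s (starN d) (hstarmono d),
        haddsup z _ (fun m n h => mul_le_mul_left (hstarmono d h) s)]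
      exact iSup_le hk
  -- (5)
  have h5 : ∀ n, newtonZ f df sub n ≤ newtonZ f df sub (n + 1) :=
    fun n => le_trans (h1 n) (h2 n)
  refine ⟨h1, h2, h3, h4, h5, ?_⟩
  apply le_antisymm (iSup_le h4)
  calc y = ⨆ n, f^[n] 0 := hysup
    _ ≤ ⨆ n, newtonZ f df sub n := iSup_mono h3
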